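/- Let K = (T, A)_ω be an ALCHIO weighted knowledge base, k an integer, and q a Boolean conjunctive query. If there exists an interpretation I with ω(I) ≤ k and I ⊨ q, then there exists an interpretation J with ω(J) ≤ k, J ⊨ q, and |Δ^J| ≤ |A| + |T| + 2^{2|T|²}; in particular the bound on |Δ^J| is polynomial in |A| (with |T| and |q| treated as constants) and independent of k. -/

import Mathlib

namespace DL

/-! ### Syntax -/

abbrev IndName := ℕ
abbrev CName := ℕ
abbrev RName := ℕ

/-- Roles: role names and inverse roles. -/
inductive Role where
  | name : RName → Role
  | inv  : RName → Role
deriving DecidableEq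

/-- `ALCHIO` concepts. -/
inductive Concept where
  | top  : Concept
  | bot  : Concept
  | atom : CName → Concept
  | nom  : IndName → Concept
  | neg  : Concept → Concept
  | conj : Concept → Concept → Concept
  | ex   : Role → Concept → Concept
deriving DecidableEq

/-- TBox axioms: concept inclusions and role inclusions. -/
inductive Axiom where
  | ci : Concept → Concept → Axiom
  | ri : Role → Role → Axiom
deriving DecidableEq

/-- ABox assertions. -/
inductive Assertion where
  | ca : CName → IndName → Assertion
  | ra : RName → IndName → IndName → Assertion
deriving DecidableEq

/-! ### Interpretations -/

/-- A DL interpretation with domain a subset of a universe `U`.  Individual names are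
interpreted via `indI` (under the standard names assumption, the individual names of the
ABox under consideration are interpreted "as themselves", i.e. injectively). -/
structure Interp (U : Type) where
  dom : Set U
  indI : IndName → U
  cI : CName → Set U
  rI : RName → Set (U × U)
  cI_sub : ∀ A, cI A ⊆ dom
  rI_sub : ∀ r p, p ∈ rI r → p.1 ∈ dom ∧ p.2 ∈ dom

variable {U : Type}

/-- Every individual name denotes an element of the domain. -/
def Interp.Proper (I : Interp U) : Prop := ∀ a, I.indI a ∈ I.dom

def Role.interp (I : Interp U) : Role → Set (U × U)
  | Role.name r => I.rI r
  | Role.inv r  => {p | (p.2, p.1) ∈ I.rI r}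

def Concept.interp (I : Interp U) : Concept → Set U
  | Concept.top => I.dom
  | Concept.bot => ∅
  | Concept.atom A => I.cI A
  | Concept.nom a => {I.indI a} ∩ I.dom
  | Concept.neg C => I.dom \ Concept.interp I C
  | Concept.conj C D => Concept.interp I C ∩ Concept.interp I D
  | Concept.ex r C => {d | ∃ e, (d, e) ∈ Role.interp I r ∧ e ∈ Concept.interp I C}

def Assertion.sat (I : Interp U) : Assertion → Prop
  | Assertion.ca A a => I.indI a ∈ I.cI A
  | Assertion.ra r a b => (I.indI a, I.indI b) ∈ I.rI r

/-! ### Violations and cost -/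

/-- Violations of a concept inclusion `C ⊑ D`. -/
def vioCI (I : Interp U) (C D : Concept) : Set U :=
  Concept.interp I C \ Concept.interp I D

/-- Violations of a role inclusion `r ⊑ s`. -/
def vioRI (I : Interp U) (r s : Role) : Set (U × U) :=
  Role.interp I r \ Role.interp I s

/-- The number of violations of an axiom. -/
noncomputable def Axiom.vioCount (I : Interp U) : Axiom → ℕ∞
  | Axiom.ci C D => (vioCI I C D).encard
  | Axiom.ri r s => (vioRI I r s).encard

open Classical in
/-- The cost of an interpretation w.r.t. a weighted knowledge base `(T, A)` with weight
functions `wT` (on TBox axioms) and `wA` (on ABox assertions). -/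
noncomputable def cost (T : Finset Axiom) (A : Finset Assertion)
    (wT : Axiom → ℕ∞) (wA : Assertion → ℕ∞) (I : Interp U) : ℕ∞ :=
  (∑ τ ∈ T, wT τ * Axiom.vioCount I τ) +
    ∑ α ∈ A, (if Assertion.sat I α then 0 else wA α)

/-! ### Queries -/

inductive Term where
  | var : ℕ → Term
  | ind : IndName → Term
deriving DecidableEq

inductive QAtom where
  | ca : CName → Term → QAtom
  | ra : RName → Term → Term → QAtom
deriving DecidableEq

/-- A Boolean conjunctive query: a finite set of atoms, all of whose variables are
(implicitly) existentially quantified. -/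
abbrev BCQ := Finset QAtom

def Term.eval (I : Interp U) (π : ℕ → U) : Term → U
  | Term.var v => π v
  | Term.ind a => I.indI a

def QAtom.sat (I : Interp U) (π : ℕ → U) : QAtom → Prop
  | QAtom.ca A t => Term.eval I π t ∈ I.cI A
  | QAtom.ra r t t' => (Term.eval I π t, Term.eval I π t') ∈ I.rI r

/-- Satisfaction of a BCQ in an interpretation. -/
def satQ (I : Interp U) (q : BCQ) : Prop :=
  ∃ π : ℕ → U, (∀ v, π v ∈ I.dom) ∧ ∀ a ∈ q, QAtom.sat I π a

/-- An instance query is a BCQ with a single atom. -/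
def IsIQ (q : BCQ) : Prop := ∃ a : QAtom, q = {a}

/-! ### Cost-based semantics -/

/-- `k`-satisfiability: some interpretation has cost at most `k`. -/
def ksat (T : Finset Axiom) (A : Finset Assertion)
    (wT : Axiom → ℕ∞) (wA : Assertion → ℕ∞) (k : ℕ) : Prop :=
  ∃ (U : Type) (I : Interp U), I.Proper ∧ cost T A wT wA I ≤ (k : ℕ∞)

/-- `K ⊨ₚᵏ q`: some interpretation of cost at most `k` satisfies `q`. -/
def satP (T : Finset Axiom) (A : Finset Assertion)
    (wT : Axiom → ℕ∞) (wA : Assertion → ℕ∞) (k : ℕ) (q : BCQ) : Prop :=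
  ∃ (U : Type) (I : Interp U), I.Proper ∧ cost T A wT wA I ≤ (k : ℕ∞) ∧ satQ I q

/-- `K ⊨꜀ᵏ q`: every interpretation of cost at most `k` satisfies `q`. -/
def satC (T : Finset Axiom) (A : Finset Assertion)
    (wT : Axiom → ℕ∞) (wA : Assertion → ℕ∞) (k : ℕ) (q : BCQ) : Prop :=
  ∀ (U : Type) (I : Interp U), I.Proper → cost T A wT wA I ≤ (k : ℕ∞) → satQ I q

/-- The optimal cost of a weighted knowledge base. -/
noncomputable def optCost (T : Finset Axiom) (A : Finset Assertion)
    (wT : Axiom → ℕ∞) (wA : Assertion → ℕ∞) : ℕ∞ :=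
  sInf {c : ℕ∞ | ∃ (U : Type) (I : Interp U), I.Proper ∧ cost T A wT wA I = c}

/-- `K ⊨ₚᵒᵖᵗ q`: some interpretation of optimal cost satisfies `q`. -/
noncomputable def satPopt (T : Finset Axiom) (A : Finset Assertion)
    (wT : Axiom → ℕ∞) (wA : Assertion → ℕ∞) (q : BCQ) : Prop :=
  ∃ (U : Type) (I : Interp U), I.Proper ∧ cost T A wT wA I = optCost T A wT wA ∧ satQ I q

/-- `K ⊨꜀ᵒᵖᵗ q`: every interpretation of optimal cost satisfies `q`. -/
noncomputable def satCopt (T : Finset Axiom) (A : Finset Assertion)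
    (wT : Axiom → ℕ∞) (wA : Assertion → ℕ∞) (q : BCQ) : Prop :=
  ∀ (U : Type) (I : Interp U), I.Proper → cost T A wT wA I = optCost T A wT wA → satQ I q

/-! ### Occurrences of symbols -/

def Role.base : Role → RName
  | Role.name r => r
  | Role.inv r => r

def Concept.cnames : Concept → Finset CName
  | Concept.atom A => {A}
  | Concept.neg C => C.cnames
  | Concept.conj C D => C.cnames ∪ D.cnames
  | Concept.ex _ C => C.cnames
  | _ => ∅

def Concept.rnames : Concept → Finset RName
  | Concept.neg C => C.rnames
  | Concept.conj C D => C.rnames ∪ D.rnames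
  | Concept.ex r C => insert r.base C.rnames
  | _ => ∅

def Concept.indNames : Concept → Finset IndName
  | Concept.nom a => {a}
  | Concept.neg C => C.indNames
  | Concept.conj C D => C.indNames ∪ D.indNames
  | Concept.ex _ C => C.indNames
  | _ => ∅

def Axiom.cnames : Axiom → Finset CName
  | Axiom.ci C D => C.cnames ∪ D.cnames
  | Axiom.ri _ _ => ∅

def Axiom.rnames : Axiom → Finset RName
  | Axiom.ci C D => C.rnames ∪ D.rnames
  | Axiom.ri r s => {r.base, s.base}

def Axiom.indNames : Axiom → Finset IndName
  | Axiom.ci C D => C.indNames ∪ D.indNames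
  | Axiom.ri _ _ => ∅

def Assertion.cnames : Assertion → Finset CName
  | Assertion.ca A _ => {A}
  | Assertion.ra _ _ _ => ∅

def Assertion.rnames : Assertion → Finset RName
  | Assertion.ca _ _ => ∅
  | Assertion.ra r _ _ => {r}

def Assertion.indNames : Assertion → Finset IndName
  | Assertion.ca _ a => {a}
  | Assertion.ra _ a b => {a, b}

/-- The individual names occurring in an ABox. -/
def aboxInds (A : Finset Assertion) : Finset IndName := A.biUnion Assertion.indNames

/-- The individual names occurring in a KB. -/
def kbInds (T : Finset Axiom) (A : Finset Assertion) : Finset IndName :=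
  T.biUnion Axiom.indNames ∪ aboxInds A

def Term.indNames : Term → Finset IndName
  | Term.var _ => ∅
  | Term.ind a => {a}

def QAtom.indNames : QAtom → Finset IndName
  | QAtom.ca _ t => t.indNames
  | QAtom.ra _ t t' => t.indNames ∪ t'.indNames

def QAtom.cnames : QAtom → Finset CName
  | QAtom.ca A _ => {A}
  | QAtom.ra _ _ _ => ∅

def qInds (q : BCQ) : Finset IndName := q.biUnion QAtom.indNames

def qCnames (q : BCQ) : Finset CName := q.biUnion QAtom.cnames

/-! ### Sizes -/

def Concept.size : Concept → ℕ
  | Concept.top => 1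
  | Concept.bot => 1
  | Concept.atom _ => 1
  | Concept.nom _ => 1
  | Concept.neg C => C.size + 1
  | Concept.conj C D => C.size + D.size + 1
  | Concept.ex _ C => C.size + 2

def Axiom.size : Axiom → ℕ
  | Axiom.ci C D => C.size + D.size + 1
  | Axiom.ri _ _ => 3

def Assertion.size : Assertion → ℕ
  | Assertion.ca _ _ => 2
  | Assertion.ra _ _ _ => 3

def tboxSize (T : Finset Axiom) : ℕ := ∑ τ ∈ T, τ.size

def aboxSize (A : Finset Assertion) : ℕ := ∑ α ∈ A, α.size

/-! ### DL-Lite fragments -/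

/-- Basic concepts: concept names and unqualified existential restrictions `∃r` (with a
possibly inverse role `r`), the latter rendered as `∃r.⊤`. -/
inductive IsBasic : Concept → Prop
  | atom (A : CName) : IsBasic (Concept.atom A)
  | ex (r : Role) : IsBasic (Concept.ex r Concept.top)

/-- A `DL-Lite_core` axiom: `B ⊑ C` or `B ⊓ C ⊑ ⊥` with `B, C` basic concepts. -/
def IsCoreAxiom (τ : Axiom) : Prop :=
  (∃ B C, τ = Axiom.ci B C ∧ IsBasic B ∧ IsBasic C) ∨
  (∃ B C, τ = Axiom.ci (Concept.conj B C) Concept.bot ∧ IsBasic B ∧ IsBasic C)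

def IsDLLiteCore (T : Finset Axiom) : Prop := ∀ τ ∈ T, IsCoreAxiom τ

/-- Concepts built from basic concepts using `¬`, `⊓` (and hence also `⊔`). -/
inductive IsBoolConcept : Concept → Prop
  | basic {C} : IsBasic C → IsBoolConcept C
  | neg {C} : IsBoolConcept C → IsBoolConcept (Concept.neg C)
  | conj {C D} : IsBoolConcept C → IsBoolConcept D → IsBoolConcept (Concept.conj C D)

/-- A `DL-Lite_bool^H` axiom: a concept inclusion between Boolean combinations of basic
concepts, or a role inclusion. -/
def IsBoolHAxiom (τ : Axiom) : Prop :=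
  (∃ C D, τ = Axiom.ci C D ∧ IsBoolConcept C ∧ IsBoolConcept D) ∨ (∃ r s, τ = Axiom.ri r s)

def IsDLLiteBoolH (T : Finset Axiom) : Prop := ∀ τ ∈ T, IsBoolHAxiom τ

/-! ### Filtration auxiliaries -/

/-- Subconcepts of a concept (including the concept itself). -/
def Concept.subs : Concept → Finset Concept
  | Concept.top => {Concept.top}
  | Concept.bot => {Concept.bot}
  | Concept.atom A => {Concept.atom A}
  | Concept.nom a => {Concept.nom a}
  | Concept.neg C => insert (Concept.neg C) C.subs
  | Concept.conj C D => insert (Concept.conj C D) (C.subs ∪ D.subs)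
  | Concept.ex r C => insert (Concept.ex r C) C.subs

lemma Concept.self_mem_subs (C : Concept) : C ∈ C.subs := by
  cases C <;> simp [Concept.subs]

lemma Concept.card_subs_le (C : Concept) : C.subs.card ≤ C.size := by
  induction C with
  | top => simp [Concept.subs, Concept.size]
  | bot => simp [Concept.subs, Concept.size]
  | atom A => simp [Concept.subs, Concept.size]
  | nom a => simp [Concept.subs, Concept.size]
  | neg C ih =>
      have h := Finset.card_insert_le (Concept.neg C) C.subs
      simp only [Concept.subs, Concept.size]; omega
  | conj C D ihC ihD =>
      have h := Finset.card_insert_le (Concept.conj C D) (C.subs ∪ D.subs)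
      have h2 := Finset.card_union_le C.subs D.subs
      simp only [Concept.subs, Concept.size]; omega
  | ex r C ih =>
      have h := Finset.card_insert_le (Concept.ex r C) C.subs
      simp only [Concept.subs, Concept.size]; omega

lemma Concept.mem_indNames_of_nom_mem_subs {a : IndName} {C : Concept}
    (h : Concept.nom a ∈ C.subs) : a ∈ C.indNames := by
  induction C with
  | top => simp [Concept.subs] at h
  | bot => simp [Concept.subs] at h
  | atom A => simp [Concept.subs] at h
  | nom b =>
      simp only [Concept.subs, Finset.mem_singleton, Concept.nom.injEq] at h
      simp [Concept.indNames, h]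
  | neg C ih =>
      simp only [Concept.subs, Finset.mem_insert] at h
      rcases h with h | h
      · exact absurd h (by simp)
      · exact ih h
  | conj C D ihC ihD =>
      simp only [Concept.subs, Finset.mem_insert, Finset.mem_union] at h
      rcases h with h | h | h
      · exact absurd h (by simp)
      · exact Finset.mem_union_left _ (ihC h)
      · exact Finset.mem_union_right _ (ihD h)
  | ex r C ih =>
      simp only [Concept.subs, Finset.mem_insert] at h
      rcases h with h | h
      · exact absurd h (by simp)
      · exact ih h

lemma Concept.card_indNames_le_size (C : Concept) : C.indNames.card ≤ C.size := by
  induction C with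
  | top => simp [Concept.indNames, Concept.size]
  | bot => simp [Concept.indNames, Concept.size]
  | atom A => simp [Concept.indNames, Concept.size]
  | nom a => simp [Concept.indNames, Concept.size]
  | neg C ih => simp only [Concept.indNames, Concept.size]; omega
  | conj C D ihC ihD =>
      have h := Finset.card_union_le C.indNames D.indNames
      simp only [Concept.indNames, Concept.size]; omega
  | ex r C ih => simp only [Concept.indNames, Concept.size]; omega

lemma Axiom.one_le_size (τ : Axiom) : 1 ≤ τ.size := by
  cases τ <;> simp [Axiom.size]

/-- Subconcepts occurring in an axiom. -/
def Axiom.axSubs : Axiom → Finset Concept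
  | Axiom.ci C D => C.subs ∪ D.subs
  | Axiom.ri _ _ => ∅

lemma Role.interp_mem_dom (I : Interp U) (r : Role) {p : U × U}
    (hp : p ∈ Role.interp I r) : p.1 ∈ I.dom ∧ p.2 ∈ I.dom := by
  cases r with
  | name r => exact I.rI_sub r p hp
  | inv r =>
      have h := I.rI_sub r (p.2, p.1) hp
      exact ⟨h.2, h.1⟩

lemma Concept.interp_subset_dom (I : Interp U) (C : Concept) :
    Concept.interp I C ⊆ I.dom := by
  induction C with
  | top => exact le_refl _
  | bot => simp [Concept.interp]
  | atom A => exact I.cI_sub A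
  | nom a => exact Set.inter_subset_right
  | neg C ih => exact Set.diff_subset
  | conj C D ihC ihD => exact Set.Subset.trans Set.inter_subset_left ihC
  | ex r C ih =>
      intro d hd
      obtain ⟨e, hr, _⟩ := hd
      exact (Role.interp_mem_dom I r hr).1

/-- Classical decision of a proposition as a `Bool`. -/
noncomputable def cdec (p : Prop) : Bool := @decide p (Classical.propDecidable p)

lemma cdec_eq_cdec {p q : Prop} : cdec p = cdec q ↔ (p ↔ q) := by
  unfold cdec; exact decide_eq_decide

lemma cdec_eq_false {p : Prop} (h : ¬p) : cdec p = false := by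
  unfold cdec; exact @decide_eq_false _ (Classical.propDecidable _) h

/-- The type map for the filtration. -/
noncomputable def fmap (S : Finset Concept) (N : Finset IndName) (I : Interp U) (d : U) :
    (Concept → Bool) × (IndName → Bool) :=
  (fun C => cdec (C ∈ S ∧ d ∈ Concept.interp I C),
   fun a => cdec (a ∈ N ∧ d = I.indI a))

lemma fmap_fst_iff {S : Finset Concept} {N : Finset IndName} {I : Interp U} {d e : U}
    (h : fmap S N I d = fmap S N I e) {C : Concept} (hC : C ∈ S) :
    d ∈ Concept.interp I C ↔ e ∈ Concept.interp I C := by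
  have h1 := congrFun (congrArg Prod.fst h) C
  simp only [fmap] at h1
  rw [cdec_eq_cdec] at h1
  exact ⟨fun hx => (h1.mp ⟨hC, hx⟩).2, fun hx => (h1.mpr ⟨hC, hx⟩).2⟩

lemma fmap_snd_iff {S : Finset Concept} {N : Finset IndName} {I : Interp U} {d e : U}
    (h : fmap S N I d = fmap S N I e) {a : IndName} (ha : a ∈ N) :
    d = I.indI a ↔ e = I.indI a := by
  have h1 := congrFun (congrArg Prod.snd h) a
  simp only [fmap] at h1
  rw [cdec_eq_cdec] at h1
  exact ⟨fun hx => (h1.mp ⟨ha, hx⟩).2, fun hx => (h1.mpr ⟨ha, hx⟩).2⟩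

/-- The filtration interpretation. -/
noncomputable def Jof (S : Finset Concept) (N : Finset IndName) (I : Interp U) :
    Interp ((Concept → Bool) × (IndName → Bool)) where
  dom := fmap S N I '' I.dom
  indI a := fmap S N I (I.indI a)
  cI A := fmap S N I '' I.cI A
  rI r := Prod.map (fmap S N I) (fmap S N I) '' I.rI r
  cI_sub A := Set.image_mono (I.cI_sub A)
  rI_sub r p hp := by
    obtain ⟨⟨x, y⟩, hxy, rfl⟩ := hp
    have h := I.rI_sub r _ hxy
    exact ⟨⟨x, h.1, rfl⟩, ⟨y, h.2, rfl⟩⟩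

lemma Role.interp_Jof (S : Finset Concept) (N : Finset IndName) (I : Interp U) (r : Role) :
    Role.interp (Jof S N I) r
      = Prod.map (fmap S N I) (fmap S N I) '' Role.interp I r := by
  cases r with
  | name r => rfl
  | inv r =>
      ext p
      constructor
      · rintro ⟨⟨x, y⟩, hxy, hpq⟩
        have h1 : fmap S N I x = p.2 := congrArg Prod.fst hpq
        have h2 : fmap S N I y = p.1 := congrArg Prod.snd hpq
        exact ⟨(y, x), hxy, Prod.ext h2 h1⟩
      · rintro ⟨⟨x, y⟩, hxy, rfl⟩
        exact ⟨(y, x), hxy, rfl⟩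

/-- The filtration lemma. -/
lemma filtration (S : Finset Concept) (N : Finset IndName) (I : Interp U)
    (hN : ∀ a, Concept.nom a ∈ S → a ∈ N) (C : Concept) (hsub : C.subs ⊆ S) :
    ∀ d ∈ I.dom,
      (fmap S N I d ∈ Concept.interp (Jof S N I) C ↔ d ∈ Concept.interp I C) := by
  induction C with
  | top =>
      intro d hd
      exact ⟨fun _ => hd, fun _ => ⟨d, hd, rfl⟩⟩
  | bot => intro d hd; simp [Concept.interp]
  | atom A =>
      intro d hd
      constructor
      · rintro ⟨e, he, hfe⟩
        have hA : Concept.atom A ∈ S := hsub (Concept.self_mem_subs _)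
        exact (fmap_fst_iff hfe hA).mp he
      · intro hd'; exact ⟨d, hd', rfl⟩
  | nom a =>
      intro d hd
      have haS : Concept.nom a ∈ S := hsub (Concept.self_mem_subs _)
      have haN : a ∈ N := hN a haS
      simp only [Concept.interp, Set.mem_inter_iff, Set.mem_singleton_iff]
      constructor
      · rintro ⟨h1, _⟩
        have h1' : fmap S N I d = fmap S N I (I.indI a) := h1
        exact ⟨(fmap_snd_iff h1' haN).mpr rfl, hd⟩
      · rintro ⟨h1, _⟩
        exact ⟨by rw [h1]; rfl, ⟨d, hd, rfl⟩⟩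
  | neg C ih =>
      intro d hd
      have hsC : C.subs ⊆ S := fun x hx => hsub (Finset.mem_insert_of_mem hx)
      simp only [Concept.interp, Set.mem_diff]
      rw [ih hsC d hd]
      exact ⟨fun ⟨_, h2⟩ => ⟨hd, h2⟩, fun ⟨_, h2⟩ => ⟨⟨d, hd, rfl⟩, h2⟩⟩
  | conj C D ihC ihD =>
      intro d hd
      have hsC : C.subs ⊆ S :=
        fun x hx => hsub (Finset.mem_insert_of_mem (Finset.mem_union_left _ hx))
      have hsD : D.subs ⊆ S :=
        fun x hx => hsub (Finset.mem_insert_of_mem (Finset.mem_union_right _ hx))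
      simp only [Concept.interp, Set.mem_inter_iff]
      rw [ihC hsC d hd, ihD hsD d hd]
  | ex r C ih =>
      intro d hd
      have hsC : C.subs ⊆ S := fun x hx => hsub (Finset.mem_insert_of_mem hx)
      simp only [Concept.interp, Set.mem_setOf_eq]
      constructor
      · rintro ⟨y, hy, hyC⟩
        rw [Role.interp_Jof] at hy
        obtain ⟨⟨d', e'⟩, hde, hpq⟩ := hy
        have h1 : fmap S N I d' = fmap S N I d := congrArg Prod.fst hpq
        have h2 : fmap S N I e' = y := congrArg Prod.snd hpq
        have he'dom : e' ∈ I.dom := (Role.interp_mem_dom I r hde).2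
        have heC : e' ∈ Concept.interp I C := (ih hsC e' he'dom).mp (h2 ▸ hyC)
        have hd' : d' ∈ Concept.interp I (Concept.ex r C) := ⟨e', hde, heC⟩
        have hS : Concept.ex r C ∈ S := hsub (Concept.self_mem_subs _)
        exact (fmap_fst_iff h1 hS).mp hd'
      · rintro ⟨e, hre, heC⟩
        refine ⟨fmap S N I e, ?_, ?_⟩
        · rw [Role.interp_Jof]; exact ⟨(d, e), hre, rfl⟩
        · exact (ih hsC e (Role.interp_mem_dom I r hre).2).mpr heC

lemma vioCI_Jof (S : Finset Concept) (N : Finset IndName) (I : Interp U)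
    (hN : ∀ a, Concept.nom a ∈ S → a ∈ N) {C D : Concept}
    (hC : C.subs ⊆ S) (hD : D.subs ⊆ S) :
    vioCI (Jof S N I) C D ⊆ fmap S N I '' vioCI I C D := by
  rintro x ⟨hxC, hxD⟩
  have hxdom : x ∈ (Jof S N I).dom := Concept.interp_subset_dom _ C hxC
  obtain ⟨d, hd, rfl⟩ := hxdom
  exact ⟨d, ⟨(filtration S N I hN C hC d hd).mp hxC,
    fun hdD => hxD ((filtration S N I hN D hD d hd).mpr hdD)⟩, rfl⟩

lemma vioRI_Jof (S : Finset Concept) (N : Finset IndName) (I : Interp U) (r s : Role) :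
    vioRI (Jof S N I) r s
      ⊆ Prod.map (fmap S N I) (fmap S N I) '' vioRI I r s := by
  rintro x ⟨hxr, hxs⟩
  rw [Role.interp_Jof] at hxr
  obtain ⟨p, hp, rfl⟩ := hxr
  refine ⟨p, ⟨hp, fun hps => hxs ?_⟩, rfl⟩
  rw [Role.interp_Jof]
  exact ⟨p, hps, rfl⟩

lemma sat_Jof (S : Finset Concept) (N : Finset IndName) (I : Interp U) {α : Assertion}
    (h : Assertion.sat I α) : Assertion.sat (Jof S N I) α := by
  cases α with
  | ca A a => exact ⟨I.indI a, h, rfl⟩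
  | ra r a b => exact ⟨(I.indI a, I.indI b), h, rfl⟩

lemma cost_Jof_le (T : Finset Axiom) (A : Finset Assertion)
    (wT : Axiom → ℕ∞) (wA : Assertion → ℕ∞)
    (S : Finset Concept) (N : Finset IndName) (I : Interp U)
    (hN : ∀ a, Concept.nom a ∈ S → a ∈ N)
    (hS : ∀ τ ∈ T, τ.axSubs ⊆ S) :
    cost T A wT wA (Jof S N I) ≤ cost T A wT wA I := by
  unfold cost
  refine add_le_add (Finset.sum_le_sum fun τ hτ => ?_) (Finset.sum_le_sum fun α hα => ?_)
  · refine mul_le_mul_right ?_ _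
    cases τ with
    | ci C D =>
        have hC : C.subs ⊆ S :=
          fun x hx => hS _ hτ (Finset.mem_union_left _ hx)
        have hD : D.subs ⊆ S :=
          fun x hx => hS _ hτ (Finset.mem_union_right _ hx)
        calc (vioCI (Jof S N I) C D).encard
            ≤ (fmap S N I '' vioCI I C D).encard :=
              Set.encard_mono (vioCI_Jof S N I hN hC hD)
          _ ≤ (vioCI I C D).encard := Set.encard_image_le _ _
    | ri r s =>
        calc (vioRI (Jof S N I) r s).encard
            ≤ (Prod.map (fmap S N I) (fmap S N I) '' vioRI I r s).encard :=
              Set.encard_mono (vioRI_Jof S N I r s)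
          _ ≤ (vioRI I r s).encard := Set.encard_image_le _ _
  · by_cases hs : Assertion.sat I α
    · have hs' : Assertion.sat (Jof S N I) α := sat_Jof S N I hs
      simp [hs, hs']
    · simp only [hs, if_false]
      split
      · exact zero_le
      · exact le_refl _

lemma satQ_Jof (S : Finset Concept) (N : Finset IndName) (I : Interp U) {q : BCQ}
    (h : satQ I q) : satQ (Jof S N I) q := by
  obtain ⟨π, hπ, hsat⟩ := h
  refine ⟨fun v => fmap S N I (π v), fun v => ⟨π v, hπ v, rfl⟩, fun a ha => ?_⟩
  have heval : ∀ t, Term.eval (Jof S N I) (fun v => fmap S N I (π v)) t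
      = fmap S N I (Term.eval I π t) := by
    intro t; cases t <;> rfl
  cases a with
  | ca A t =>
      show Term.eval (Jof S N I) _ t ∈ (Jof S N I).cI A
      rw [heval]
      exact ⟨Term.eval I π t, hsat _ ha, rfl⟩
  | ra r t t' =>
      show (Term.eval (Jof S N I) _ t, Term.eval (Jof S N I) _ t') ∈ (Jof S N I).rI r
      rw [heval, heval]
      exact ⟨(Term.eval I π t, Term.eval I π t'), hsat _ ha, rfl⟩

lemma encard_dom_Jof (S : Finset Concept) (N : Finset IndName) (I : Interp U) :
    (Jof S N I).dom.encard ≤ ((N.card + 2 ^ S.card : ℕ) : ℕ∞) := by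
  classical
  set f := fmap S N I with hf
  let g : ({C // C ∈ S} → Bool) → (Concept → Bool) × (IndName → Bool) :=
    fun h => (fun C => if hc : C ∈ S then h ⟨C, hc⟩ else false, fun _ => false)
  have hsplit : (Jof S N I).dom ⊆ (f '' (I.indI '' ↑N)) ∪ Set.range g := by
    rintro x ⟨d, hd, rfl⟩
    by_cases hA : ∃ a ∈ N, d = I.indI a
    · obtain ⟨a, haN, rfl⟩ := hA
      exact Or.inl ⟨I.indI a, ⟨a, haN, rfl⟩, rfl⟩
    · refine Or.inr ⟨fun C => (f d).1 ↑C, ?_⟩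
      push_neg at hA
      refine Prod.ext (funext fun C => ?_) (funext fun a => ?_)
      · by_cases hC : C ∈ S
        · simp [g, hC, hf]
        · simp only [g, dif_neg hC]
          exact (cdec_eq_false (fun hcon => hC hcon.1)).symm
      · exact (cdec_eq_false (fun hcon => hA a hcon.1 hcon.2)).symm
  calc (Jof S N I).dom.encard
      ≤ ((f '' (I.indI '' ↑N)) ∪ Set.range g).encard := Set.encard_mono hsplit
    _ ≤ (f '' (I.indI '' ↑N)).encard + (Set.range g).encard := Set.encard_union_le _ _
    _ ≤ ((N.card + 2 ^ S.card : ℕ) : ℕ∞) := by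
        have h1 : (f '' (I.indI '' ↑N)).encard ≤ (N.card : ℕ∞) := by
          calc (f '' (I.indI '' ↑N)).encard ≤ (I.indI '' ↑N).encard :=
                Set.encard_image_le _ _
            _ ≤ (↑N : Set IndName).encard := Set.encard_image_le _ _
            _ = (N.card : ℕ∞) := Set.encard_coe_eq_coe_finsetCard N
        have h2 : (Set.range g).encard ≤ ((2 ^ S.card : ℕ) : ℕ∞) := by
          calc (Set.range g).encard = (g '' Set.univ).encard := by rw [Set.image_univ]
            _ ≤ (Set.univ : Set ({C // C ∈ S} → Bool)).encard := Set.encard_image_le _ _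
            _ = ((2 ^ S.card : ℕ) : ℕ∞) := by
                rw [Set.encard_univ]
                rw [ENat.card_eq_coe_fintype_card]
                congr 1
                simp [Fintype.card_fun]
        calc (f '' (I.indI '' ↑N)).encard + (Set.range g).encard
            ≤ (N.card : ℕ∞) + ((2 ^ S.card : ℕ) : ℕ∞) := add_le_add h1 h2
          _ = ((N.card + 2 ^ S.card : ℕ) : ℕ∞) := by push_cast; ring

/-- (Filtration / small model for query satisfaction.)  If some
interpretation has cost at most `k` and satisfies the BCQ `q`, then some interpretation
has cost at most `k`, satisfies `q`, and has domain of size at most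
`|A| + |T| + 2^(2|T|²)` — a bound polynomial in `|A|` and independent of `k`. -/
theorem statement2 (T : Finset Axiom) (A : Finset Assertion)
    (wT : Axiom → ℕ∞) (wA : Assertion → ℕ∞)
    (hwT : ∀ τ ∈ T, 1 ≤ wT τ) (hwA : ∀ α ∈ A, 1 ≤ wA α)
    (k : ℕ) (q : BCQ)
    (h : ∃ (U : Type) (I : Interp U), I.Proper ∧ cost T A wT wA I ≤ (k : ℕ∞) ∧ satQ I q) :
    ∃ (U' : Type) (J : Interp U'), J.Proper ∧ cost T A wT wA J ≤ (k : ℕ∞) ∧ satQ J q ∧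
      J.dom.encard ≤ ((aboxSize A + tboxSize T + 2 ^ (2 * tboxSize T ^ 2) : ℕ) : ℕ∞) := by
  obtain ⟨U, I, hProper, hcost, hq⟩ := h
  set S : Finset Concept := T.biUnion Axiom.axSubs with hSdef
  set N : Finset IndName := T.biUnion Axiom.indNames with hNdef
  have hS : ∀ τ ∈ T, τ.axSubs ⊆ S := fun τ hτ => Finset.subset_biUnion_of_mem _ hτ
  have hN : ∀ a, Concept.nom a ∈ S → a ∈ N := by
    intro a ha
    rw [hSdef, Finset.mem_biUnion] at ha
    obtain ⟨τ, hτ, hmem⟩ := ha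
    rw [hNdef, Finset.mem_biUnion]
    refine ⟨τ, hτ, ?_⟩
    cases τ with
    | ci C D =>
        simp only [Axiom.axSubs, Finset.mem_union] at hmem
        rcases hmem with hmem | hmem
        · exact Finset.mem_union_left _ (Concept.mem_indNames_of_nom_mem_subs hmem)
        · exact Finset.mem_union_right _ (Concept.mem_indNames_of_nom_mem_subs hmem)
    | ri r s => simp [Axiom.axSubs] at hmem
  refine ⟨_, Jof S N I, ?_, ?_, ?_, ?_⟩
  · intro a
    exact ⟨I.indI a, hProper a, rfl⟩
  · exact le_trans (cost_Jof_le T A wT wA S N I hN hS) hcost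
  · exact satQ_Jof S N I hq
  · -- cardinality bound
    have hNcard : N.card ≤ tboxSize T := by
      calc N.card ≤ ∑ τ ∈ T, τ.indNames.card := Finset.card_biUnion_le
        _ ≤ ∑ τ ∈ T, τ.size := by
            refine Finset.sum_le_sum fun τ _ => ?_
            cases τ with
            | ci C D =>
                have h1 := Finset.card_union_le C.indNames D.indNames
                have h2 := Concept.card_indNames_le_size C
                have h3 := Concept.card_indNames_le_size D
                simp only [Axiom.indNames, Axiom.size]; omega
            | ri r s => simp [Axiom.indNames, Axiom.size]
        _ = tboxSize T := rfl
    have hScard : S.card ≤ tboxSize T := by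
      calc S.card ≤ ∑ τ ∈ T, τ.axSubs.card := Finset.card_biUnion_le
        _ ≤ ∑ τ ∈ T, τ.size := by
            refine Finset.sum_le_sum fun τ _ => ?_
            cases τ with
            | ci C D =>
                have h1 := Finset.card_union_le C.subs D.subs
                have h2 := Concept.card_subs_le C
                have h3 := Concept.card_subs_le D
                simp only [Axiom.axSubs, Axiom.size]; omega
            | ri r s => simp [Axiom.axSubs, Axiom.size]
        _ = tboxSize T := rfl
    have hS2 : S.card ≤ 2 * tboxSize T ^ 2 := by
      rcases Nat.eq_zero_or_pos (tboxSize T) with ht | ht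
      · have hTempty : T = ∅ := by
          by_contra hne
          obtain ⟨τ, hτ⟩ := Finset.nonempty_iff_ne_empty.mpr hne
          have h1 : τ.size ≤ tboxSize T := Finset.single_le_sum (fun τ _ => Nat.zero_le _) hτ
          have h2 := Axiom.one_le_size τ
          omega
        have : S = ∅ := by rw [hSdef, hTempty]; rfl
        simp [this]
      · nlinarith
    have hnat : N.card + 2 ^ S.card
        ≤ aboxSize A + tboxSize T + 2 ^ (2 * tboxSize T ^ 2) := by
      have h2 : (2:ℕ) ^ S.card ≤ 2 ^ (2 * tboxSize T ^ 2) :=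
        Nat.pow_le_pow_right (by norm_num) hS2
      omega
    calc (Jof S N I).dom.encard ≤ ((N.card + 2 ^ S.card : ℕ) : ℕ∞) :=
          encard_dom_Jof S N I
      _ ≤ ((aboxSize A + tboxSize T + 2 ^ (2 * tboxSize T ^ 2) : ℕ) : ℕ∞) :=
          Nat.cast_le.mpr hnat

end DL
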